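/- Let P be a set of n ≥ 5 points in convex position, encapsulated by a family 𝒦 of convex sets, and suppose some point x in the interior of conv(P) lies in at least two sets of 𝒦. Then |𝒦| ≥ ⌈n/2⌉ + 2. -/

import Mathlib

open Finset

set_option linter.unnecessarySeqFocus false

private lemma extreme_not_open {P : Set (ℝ × ℝ)} {m u v : ℝ × ℝ} {t : ℝ}
    (hm : m ∈ (convexHull ℝ P).extremePoints ℝ) (hu : u ∈ convexHull ℝ P)
    (hv : v ∈ convexHull ℝ P) (ht0 : 0 < t) (ht1 : t < 1)
    (heq : t • u + (1 - t) • v = m) (hum : u ≠ m) : False := by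
  have h := (mem_extremePoints.mp hm).2 u hu v hv ⟨t, 1 - t, ht0, by linarith, by ring, heq⟩
  exact hum h.1

private lemma mem3 {K : Set (ℝ × ℝ)} (hK : Convex ℝ K) {x v p q : ℝ × ℝ} {A B C ε : ℝ}
    (hxeq : x = A • v + B • p + C • q) (hsum : A + B + C = 1) (hB : 0 ≤ B) (hC : 0 ≤ C)
    (hε : 0 < ε) (hεA : 0 < 1 + ε * A)
    (h1 : v + ε • (v - x) ∈ K) (h2 : p + ε • (p - x) ∈ K) (h3 : q + ε • (q - x) ∈ K) :
    v ∈ K := by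
  obtain rfl : A = 1 - B - C := by linarith
  have hε1 : (0:ℝ) < 1 + ε := by linarith
  set l1 : ℝ := (1 + ε * (1 - B - C)) / (1 + ε) with hl1
  set l2 : ℝ := ε * B / (1 + ε) with hl2
  set l3 : ℝ := ε * C / (1 + ε) with hl3
  have hl1n : 0 ≤ l1 := div_nonneg (le_of_lt hεA) (le_of_lt hε1)
  have hl2n : 0 ≤ l2 := div_nonneg (by positivity) (le_of_lt hε1)
  have hl3n : 0 ≤ l3 := div_nonneg (by positivity) (le_of_lt hε1)
  have hlsum : l1 + l2 + l3 = 1 := by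
    rw [hl1, hl2, hl3]; field_simp; ring
  have key : l1 • (v + ε • (v - x)) + (l2 • (p + ε • (p - x)) + l3 • (q + ε • (q - x))) = v := by
    rw [hxeq, hl1, hl2, hl3]
    match_scalars <;> field_simp <;> ring
  have hmem : l1 • (v + ε • (v - x)) + (l2 • (p + ε • (p - x)) + l3 • (q + ε • (q - x))) ∈ K := by
    have hs := hK.sum_mem (t := Finset.univ) (w := ![l1, l2, l3])
      (z := ![v + ε • (v - x), p + ε • (p - x), q + ε • (q - x)])
      (by intro i _; fin_cases i <;> simpa using by assumption)
      (by simp [Fin.sum_univ_three]; linarith [hlsum])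
      (by intro i _; fin_cases i <;> simpa using by assumption)
    simpa [Fin.sum_univ_three, add_assoc] using hs
  exact key ▸ hmem

private lemma collinear_case {P : Finset (ℝ × ℝ)}
    (hconvpos : (P : Set (ℝ × ℝ)) ⊆ (convexHull ℝ (P : Set (ℝ × ℝ))).extremePoints ℝ)
    {a b c : ℝ × ℝ} (ha : a ∈ P) (hb : b ∈ P) (hc : c ∈ P)
    (hab : a ≠ b) (hac : a ≠ c) (hbc : b ≠ c) :
    LinearIndependent ℝ ![b - a, c - a] := by
  have haS : a ∈ convexHull ℝ (P : Set (ℝ × ℝ)) := subset_convexHull ℝ _ ha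
  have hbS : b ∈ convexHull ℝ (P : Set (ℝ × ℝ)) := subset_convexHull ℝ _ hb
  have hcS : c ∈ convexHull ℝ (P : Set (ℝ × ℝ)) := subset_convexHull ℝ _ hc
  rw [LinearIndependent.pair_iff]
  intro s t hst
  by_cases ht : t = 0
  · subst ht
    refine ⟨?_, rfl⟩
    by_contra hs
    have : b - a = 0 := by
      have := hst
      simp only [zero_smul, add_zero] at this
      exact (smul_eq_zero.mp this).resolve_left hs
    exact hab (sub_eq_zero.mp this).symm
  · exfalso
    set r : ℝ := -s / t with hr
    have hceq : c = a + r • (b - a) := by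
      have h1 : t • (c - a) = (-s) • (b - a) := by
        rw [neg_smul]; exact eq_neg_of_add_eq_zero_right hst
      have h2 : c - a = r • (b - a) := by
        rw [hr, div_eq_inv_mul, mul_smul, ← h1, smul_smul, inv_mul_cancel₀ ht, one_smul]
      rw [← h2]; abel
    rcases lt_trichotomy r 0 with hr0 | hr0 | hr0
    · -- a ∈ openSegment b c : a = (-r/(1-r)) • b + (1/(1-r)) • c
      have h1r : (0:ℝ) < 1 - r := by linarith
      refine extreme_not_open (hconvpos ha) hbS hcS
        (t := -r / (1 - r)) (div_pos (by linarith) h1r) ?_ ?_ hab.symm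
      · rw [div_lt_one h1r]; linarith
      · have : 1 - -r / (1 - r) = 1 / (1 - r) := by field_simp; ring
        rw [this, hceq]
        match_scalars <;> field_simp <;> ring
    · exact hac (show a = c by rw [hceq, hr0]; simp)
    · rcases lt_trichotomy r 1 with hr1 | hr1 | hr1
      · -- c ∈ openSegment a b : c = (1-r) • a + r • b
        refine extreme_not_open (hconvpos hc) haS hbS
          (t := 1 - r) (by linarith) (by linarith) ?_ hac
        rw [hceq]; match_scalars <;> ring
      · exact hbc (show b = c by rw [hceq, hr1, one_smul]; abel)
      · -- b ∈ openSegment a c : b = (1-1/r) • a + (1/r) • c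
        have hrne : r ≠ 0 := by linarith
        refine extreme_not_open (hconvpos hb) haS hcS
          (t := 1 - 1/r) (by rw [sub_pos, div_lt_one (by linarith)]; linarith) ?_ ?_ hab
        · have : (0:ℝ) < 1/r := by positivity
          linarith
        · have : 1 - (1 - 1/r) = 1/r := by ring
          rw [this, hceq]
          match_scalars <;> field_simp <;> ring

private lemma triple_lemma {P : Finset (ℝ × ℝ)}
    (hconvpos : (P : Set (ℝ × ℝ)) ⊆ (convexHull ℝ (P : Set (ℝ × ℝ))).extremePoints ℝ)
    {x : ℝ × ℝ} (hxS : x ∈ convexHull ℝ (P : Set (ℝ × ℝ)))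
    (hxe : ∀ p ∈ P, p ≠ x)
    {a b c : ℝ × ℝ} (ha : a ∈ P) (hb : b ∈ P) (hc : c ∈ P)
    (hab : a ≠ b) (hac : a ≠ c) (hbc : b ≠ c) :
    ∃ δ > 0, ∀ ε : ℝ, 0 < ε → ε < δ → ∀ K : Set (ℝ × ℝ), Convex ℝ K →
      (∀ p ∈ P, p ∉ K) →
      a + ε • (a - x) ∈ K → b + ε • (b - x) ∈ K → c + ε • (c - x) ∈ K → False := by
  have haS : a ∈ convexHull ℝ (P : Set (ℝ × ℝ)) := subset_convexHull ℝ _ ha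
  have hbS : b ∈ convexHull ℝ (P : Set (ℝ × ℝ)) := subset_convexHull ℝ _ hb
  have hcS : c ∈ convexHull ℝ (P : Set (ℝ × ℝ)) := subset_convexHull ℝ _ hc
  have hli := collinear_case hconvpos ha hb hc hab hac hbc
  have hcardeq : Fintype.card (Fin 2) = Module.finrank ℝ (ℝ × ℝ) := by
    simp [Module.finrank_prod, Module.finrank_self]
  set B := basisOfLinearIndependentOfCardEqFinrank hli hcardeq with hBdef
  have hcoe : ⇑B = ![b - a, c - a] :=
    coe_basisOfLinearIndependentOfCardEqFinrank hli hcardeq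
  have hBrepr := B.sum_repr (x - a)
  set β := B.repr (x - a) 0 with hβdef
  set γ := B.repr (x - a) 1 with hγdef
  have hxa : β • (b - a) + γ • (c - a) = x - a := by
    have h0 : B 0 = b - a := by rw [hcoe]; rfl
    have h1 : B 1 = c - a := by rw [hcoe]; rfl
    rw [Fin.sum_univ_two, h0, h1] at hBrepr
    exact hBrepr
  have hx2 : x = (1 - β - γ) • a + β • b + γ • c := by
    have h' : x = a + (β • (b - a) + γ • (c - a)) := by rw [hxa]; abel
    rw [h']; module
  set α : ℝ := 1 - β - γ with hα
  have hsum : α + β + γ = 1 := by rw [hα]; ring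
  have hneg2 : ∀ u vv ww : ℝ × ℝ, ∀ A B C : ℝ, u ∈ P → vv ∈ convexHull ℝ (P : Set (ℝ × ℝ)) →
      ww ∈ convexHull ℝ (P : Set (ℝ × ℝ)) →
      x = A • u + B • vv + C • ww → A + B + C = 1 → B < 0 → C < 0 → False := by
    intro u vv ww A B' C' huP hvS hwS hxeq hs hB' hC'
    have hA1 : 1 < A := by linarith
    have hA0 : (0:ℝ) < A := by linarith
    have hA1' : (0:ℝ) < A - 1 := by linarith
    have hAne : A ≠ 0 := ne_of_gt hA0
    have hA1ne : A - 1 ≠ 0 := ne_of_gt hA1'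
    set m := (-B' / (A - 1)) • vv + (-C' / (A - 1)) • ww with hm
    have hmS : m ∈ convexHull ℝ (P : Set (ℝ × ℝ)) :=
      (convex_convexHull ℝ _) hvS hwS (div_pos (by linarith) hA1').le
        (div_pos (by linarith) hA1').le
        (by rw [← add_div, div_eq_one_iff_eq hA1ne]; linarith)
    refine extreme_not_open (hconvpos huP) hxS hmS (t := 1/A) (by positivity)
      (by rw [div_lt_one hA0]; linarith) ?_ (Ne.symm (hxe u huP))
    rw [hm, hxeq]
    match_scalars <;> field_simp <;> ring
  have e1 : ¬(β < 0 ∧ γ < 0) := fun ⟨h1, h2⟩ => hneg2 a b c α β γ ha hbS hcS hx2 hsum h1 h2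
  have e2 : ¬(α < 0 ∧ γ < 0) := fun ⟨h1, h2⟩ =>
    hneg2 b a c β α γ hb haS hcS (by rw [hx2]; module) (by linarith) h1 h2
  have e3 : ¬(α < 0 ∧ β < 0) := fun ⟨h1, h2⟩ =>
    hneg2 c a b γ α β hc haS hbS (by rw [hx2]; module) (by linarith) h1 h2
  set M : ℝ := |α| + |β| + |γ| with hMdef
  refine ⟨1 / (1 + M), by positivity, ?_⟩
  intro ε hε hεδ K hK hKP h1 h2 h3
  have hM1 : ε * (1 + M) < 1 := by
    rw [← lt_div_iff₀ (by positivity : (0:ℝ) < 1 + M)]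
    exact hεδ
  have hbound : ∀ A : ℝ, |A| ≤ M → 0 < 1 + ε * A := by
    intro A hA
    nlinarith [neg_abs_le A]
  have hαM : |α| ≤ M := by rw [hMdef]; nlinarith [abs_nonneg β, abs_nonneg γ]
  have hβM : |β| ≤ M := by rw [hMdef]; nlinarith [abs_nonneg α, abs_nonneg γ]
  have hγM : |γ| ≤ M := by rw [hMdef]; nlinarith [abs_nonneg α, abs_nonneg β]
  rcases lt_or_ge α 0 with hα0 | hα0
  · have hβ0 : 0 ≤ β := le_of_not_gt fun h => e3 ⟨hα0, h⟩
    have hγ0 : 0 ≤ γ := le_of_not_gt fun h => e2 ⟨hα0, h⟩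
    exact hKP a ha (mem3 hK hx2 hsum hβ0 hγ0 hε (hbound α hαM) h1 h2 h3)
  · rcases lt_or_ge β 0 with hβ0 | hβ0
    · have hγ0 : 0 ≤ γ := le_of_not_gt fun h => e1 ⟨hβ0, h⟩
      exact hKP b hb (mem3 hK (show x = β • b + α • a + γ • c by rw [hx2]; module)
        (by linarith) hα0 hγ0 hε (hbound β hβM) h2 h1 h3)
    · rcases lt_or_ge γ 0 with hγ0 | hγ0
      · exact hKP c hc (mem3 hK (show x = γ • c + α • a + β • b by rw [hx2]; module)
          (by linarith) hα0 hβ0 hε (hbound γ hγM) h3 h1 h2)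
      · exact hKP a ha (mem3 hK hx2 hsum hβ0 hγ0 hε (hbound α hαM) h1 h2 h3)

/-- If `n ≥ 5` points in convex position are encapsulated by a family `𝒦` of convex sets
and some point `x` of the interior of the convex hull lies in at least two members of `𝒦`,
then `|𝒦| ≥ ⌈n/2⌉ + 2`. -/
theorem stmt_7 (n : ℕ) (hn : 5 ≤ n) (P : Finset (ℝ × ℝ)) (hcard : P.card = n)
    (hconvpos : (P : Set (ℝ × ℝ)) ⊆ (convexHull ℝ (P : Set (ℝ × ℝ))).extremePoints ℝ)
    (𝒦 : Finset (Set (ℝ × ℝ)))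
    (hconv : ∀ K ∈ 𝒦, Convex ℝ K)
    (hdisjP : ∀ K ∈ 𝒦, K ⊆ ((P : Set (ℝ × ℝ)))ᶜ)
    (henc : ∀ p ∈ P, ∃ N ∈ nhds p,
      (⋃₀ (𝒦 : Set (Set (ℝ × ℝ)))) ∩ N = N \ {p})
    (hx : ∃ x ∈ interior (convexHull ℝ (P : Set (ℝ × ℝ))),
      ∃ K₁ ∈ 𝒦, ∃ K₂ ∈ 𝒦, K₁ ≠ K₂ ∧ x ∈ K₁ ∧ x ∈ K₂) :
    (n + 1) / 2 + 2 ≤ 𝒦.card := by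
  classical
  obtain ⟨x, hxint, K₁, hK₁, K₂, hK₂, hK12, hxK₁, hxK₂⟩ := hx
  have hxS : x ∈ convexHull ℝ (P : Set (ℝ × ℝ)) := interior_subset hxint
  have hPne : P.Nonempty := Finset.card_pos.mp (by omega)
  -- extreme points differ from the interior point x
  have hxe : ∀ p ∈ P, p ≠ x := by
    intro p hp hpx
    subst hpx
    obtain ⟨r, hr, hball⟩ := Metric.isOpen_iff.mp isOpen_interior p hxint
    set v : ℝ × ℝ := (r / 2, 0) with hv
    have hvne : v ≠ 0 := by
      simp only [hv, Prod.mk.injEq, Prod.ext_iff, ne_eq]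
      intro h
      have := h.1
      simp at this
      linarith
    have hnv : ‖v‖ = r / 2 := by
      simp [hv, Prod.norm_def, abs_of_pos hr, max_eq_left (by linarith : (0:ℝ) ≤ r / 2)]
    have h1 : p + v ∈ convexHull ℝ (P : Set (ℝ × ℝ)) := by
      refine interior_subset (hball ?_)
      simp [Metric.mem_ball, dist_eq_norm, hnv]
      linarith
    have h2 : p - v ∈ convexHull ℝ (P : Set (ℝ × ℝ)) := by
      refine interior_subset (hball ?_)
      simp only [Metric.mem_ball, dist_eq_norm, sub_sub_cancel_left, norm_neg]
      rw [hnv]; linarith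
    refine extreme_not_open (hconvpos hp) h1 h2 (t := 1/2) (by norm_num) (by norm_num) ?_ ?_
    · match_scalars <;> norm_num
    · intro h
      exact hvne (by simpa using congrArg (· - p) h)
  -- neighborhood scales
  have hnbhd : ∀ a : ℝ × ℝ, ∃ δ, 0 < δ ∧ (a ∈ P → ∀ ε : ℝ, 0 < ε → ε < δ →
      a + ε • (a - x) ∈ ⋃₀ (𝒦 : Set (Set (ℝ × ℝ)))) := by
    intro a
    by_cases ha : a ∈ P
    · obtain ⟨N, hN, hNe⟩ := henc a ha
      have hcont : Filter.Tendsto (fun t : ℝ => a + t • (a - x)) (nhds 0) (nhds a) := by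
        have hc : Continuous fun t : ℝ => a + t • (a - x) := by continuity
        have := hc.tendsto 0
        simpa using this
      obtain ⟨δ, hδ, hsub⟩ := Metric.mem_nhds_iff.mp (hcont hN)
      refine ⟨δ, hδ, fun _ ε hε hεδ => ?_⟩
      have hmem : a + ε • (a - x) ∈ N := by
        apply hsub
        simp [Metric.mem_ball, Real.dist_eq, abs_of_pos hε]
        exact hεδ
      have hne : a + ε • (a - x) ≠ a := by
        intro h
        have : ε • (a - x) = 0 := by simpa using congrArg (· - a) h
        exact (smul_ne_zero (ne_of_gt hε) (sub_ne_zero.mpr (hxe a ha))) this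
      have : a + ε • (a - x) ∈ N \ {a} := ⟨hmem, by simpa using hne⟩
      rw [← hNe] at this
      exact this.1
    · exact ⟨1, one_pos, fun h => absurd h ha⟩
  choose δ₁ hδ₁pos hδ₁ using hnbhd
  -- triple bounds
  have htrip : ∀ T : (ℝ × ℝ) × (ℝ × ℝ) × (ℝ × ℝ), ∃ δ, 0 < δ ∧
      ((T.1 ∈ P ∧ T.2.1 ∈ P ∧ T.2.2 ∈ P ∧ T.1 ≠ T.2.1 ∧ T.1 ≠ T.2.2 ∧ T.2.1 ≠ T.2.2) →
        ∀ ε : ℝ, 0 < ε → ε < δ → ∀ K : Set (ℝ × ℝ), Convex ℝ K → (∀ p ∈ P, p ∉ K) →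
          T.1 + ε • (T.1 - x) ∈ K → T.2.1 + ε • (T.2.1 - x) ∈ K →
          T.2.2 + ε • (T.2.2 - x) ∈ K → False) := by
    intro T
    by_cases h : T.1 ∈ P ∧ T.2.1 ∈ P ∧ T.2.2 ∈ P ∧ T.1 ≠ T.2.1 ∧ T.1 ≠ T.2.2 ∧ T.2.1 ≠ T.2.2
    · obtain ⟨h1, h2, h3, h4, h5, h6⟩ := h
      obtain ⟨δ, hδ, hh⟩ := triple_lemma hconvpos hxS hxe h1 h2 h3 h4 h5 h6
      exact ⟨δ, hδ, fun _ => hh⟩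
    · exact ⟨1, one_pos, fun hc => absurd hc h⟩
  choose δ₂ hδ₂pos hδ₂ using htrip
  -- global epsilon
  have h𝒯ne : (P ×ˢ P ×ˢ P).Nonempty := hPne.product (hPne.product hPne)
  set d1 := P.inf' hPne δ₁ with hd1
  set d2 := (P ×ˢ P ×ˢ P).inf' h𝒯ne δ₂ with hd2
  have hd1pos : 0 < d1 := (Finset.lt_inf'_iff hPne).mpr fun a _ => hδ₁pos a
  have hd2pos : 0 < d2 := (Finset.lt_inf'_iff h𝒯ne).mpr fun T _ => hδ₂pos T
  set ε := min d1 d2 / 2 with hε'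
  have hε : 0 < ε := by positivity
  have hεd1 : ∀ a ∈ P, ε < δ₁ a := by
    intro a ha
    calc ε < min d1 d2 := by rw [hε']; exact half_lt_self (by positivity)
    _ ≤ d1 := min_le_left _ _
    _ ≤ δ₁ a := Finset.inf'_le _ ha
  have hεd2 : ∀ T ∈ P ×ˢ P ×ˢ P, ε < δ₂ T := by
    intro T hT
    calc ε < min d1 d2 := by rw [hε']; exact half_lt_self (by positivity)
    _ ≤ d2 := min_le_right _ _
    _ ≤ δ₂ T := Finset.inf'_le _ hT
  -- assignment of sets to points
  have hchoose : ∀ a : ℝ × ℝ, ∃ K : Set (ℝ × ℝ), a ∈ P → K ∈ 𝒦 ∧ a + ε • (a - x) ∈ K := by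
    intro a
    by_cases ha : a ∈ P
    · obtain ⟨K, hKmem, hmem⟩ := hδ₁ a ha ε hε (hεd1 a ha)
      exact ⟨K, fun _ => ⟨hKmem, hmem⟩⟩
    · exact ⟨∅, fun h => absurd h ha⟩
  choose g hg using hchoose
  -- g a is never K₁ or K₂
  have hgK : ∀ a ∈ P, ∀ K ∈ 𝒦, x ∈ K → a + ε • (a - x) ∈ K → False := by
    intro a ha K hK hxK hβK
    have hconvK := hconv K hK
    have hε1 : (0:ℝ) < 1 + ε := by linarith
    have hcomb : (1 / (1 + ε)) • (a + ε • (a - x)) + (ε / (1 + ε)) • x = a := by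
      match_scalars <;> field_simp <;> ring
    have : a ∈ K := by
      rw [← hcomb]
      exact hconvK hβK hxK (by positivity) (by positivity)
        (by rw [← add_div, div_eq_one_iff_eq (ne_of_gt hε1)])
    exact hdisjP K hK this (by simpa using ha)
  have hgne : ∀ a ∈ P, g a ≠ K₁ ∧ g a ≠ K₂ := by
    intro a ha
    constructor
    · intro h
      exact hgK a ha K₁ hK₁ hxK₁ (h ▸ (hg a ha).2)
    · intro h
      exact hgK a ha K₂ hK₂ hxK₂ (h ▸ (hg a ha).2)
  -- counting
  set t := (𝒦.erase K₁).erase K₂ with ht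
  have hmap : ∀ a ∈ P, g a ∈ t := by
    intro a ha
    exact Finset.mem_erase.mpr ⟨(hgne a ha).2,
      Finset.mem_erase.mpr ⟨(hgne a ha).1, (hg a ha).1⟩⟩
  have hfib : ∀ K ∈ t, (P.filter (fun a => g a = K)).card ≤ 2 := by
    intro K hKt
    by_contra hcon
    push_neg at hcon
    obtain ⟨a, ha, b, hb, c, hc, hab, hac, hbc⟩ := Finset.two_lt_card.mp hcon
    obtain ⟨haP, hga⟩ := Finset.mem_filter.mp ha
    obtain ⟨hbP, hgb⟩ := Finset.mem_filter.mp hb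
    obtain ⟨hcP, hgc⟩ := Finset.mem_filter.mp hc
    have hK𝒦 : K ∈ 𝒦 := Finset.mem_of_mem_erase (Finset.mem_of_mem_erase hKt)
    refine hδ₂ (a, b, c) ⟨haP, hbP, hcP, hab, hac, hbc⟩ ε hε
      (hεd2 (a, b, c) (by simp [Finset.mem_product, haP, hbP, hcP])) K (hconv K hK𝒦)
      (fun p hp hpK => hdisjP K hK𝒦 hpK (by simpa using hp)) ?_ ?_ ?_
    · exact hga ▸ (hg a haP).2
    · exact hgb ▸ (hg b hbP).2
    · exact hgc ▸ (hg c hcP).2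
  have hcount : P.card ≤ 2 * t.card :=
    Finset.card_le_mul_card_image_of_maps_to hmap 2 hfib
  have hK₂' : K₂ ∈ 𝒦.erase K₁ := Finset.mem_erase.mpr ⟨hK12.symm, hK₂⟩
  have htcard : t.card = 𝒦.card - 1 - 1 := by
    rw [ht, Finset.card_erase_of_mem hK₂', Finset.card_erase_of_mem hK₁]
  have h2le : 2 ≤ 𝒦.card := by
    have : 1 ≤ (𝒦.erase K₁).card := Finset.card_pos.mpr ⟨K₂, hK₂'⟩
    have := Finset.card_erase_of_mem hK₁
    omega
  rw [htcard] at hcount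
  rw [hcard] at hcount
  omega
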